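/- Let μ be a Borel probability measure on S² with Q-tensor Q = ∫(p⊗p − (1/3)I)dμ(p). Then for n ∈ S², the function n ↦ ∫_{S²}|p⊗p − n⊗n|² dμ(p) equals 2(2/3 − Qn·n), and is minimized exactly when n is a unit eigenvector of Q corresponding to its largest eigenvalue. -/

import Mathlib

open Matrix MeasureTheory

local notation "E3" => EuclideanSpace ℝ (Fin 3)

lemma inner_eq_dot (x y : E3) : (inner ℝ x y : ℝ) = (x : Fin 3 → ℝ) ⬝ᵥ (y : Fin 3 → ℝ) := by
  simp [PiLp.inner_apply, dotProduct, mul_comm]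

lemma dot_self_nonneg (v : Fin 3 → ℝ) : 0 ≤ v ⬝ᵥ v :=
  Finset.sum_nonneg fun i _ => mul_self_nonneg _

lemma dot_self_pos {v : Fin 3 → ℝ} (hv : v ≠ 0) : 0 < v ⬝ᵥ v :=
  lt_of_le_of_ne (dot_self_nonneg v) fun h => hv (dotProduct_self_eq_zero.1 h.symm)


variable {Q : Matrix (Fin 3) (Fin 3) ℝ} (hQ : Q.IsHermitian)

lemma basis_dot (i j : Fin 3) :
    (⇑(hQ.eigenvectorBasis i) : Fin 3 → ℝ) ⬝ᵥ ⇑(hQ.eigenvectorBasis j) = if i = j then 1 else 0 := by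
  rw [← inner_eq_dot]
  exact orthonormal_iff_ite.mp hQ.eigenvectorBasis.orthonormal i j

lemma spectral3 (m : Fin 3 → ℝ) :
    m = ∑ i, ((⇑(hQ.eigenvectorBasis i) : Fin 3 → ℝ) ⬝ᵥ m) • ⇑(hQ.eigenvectorBasis i) := by
  have h := hQ.eigenvectorBasis.sum_repr' ((WithLp.equiv 2 (Fin 3 → ℝ)).symm m)
  have h2 : ∀ i, (inner ℝ (hQ.eigenvectorBasis i) ((WithLp.equiv 2 (Fin 3 → ℝ)).symm m) : ℝ)
      = (⇑(hQ.eigenvectorBasis i) : Fin 3 → ℝ) ⬝ᵥ m := fun i => inner_eq_dot _ _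
  calc m = (∑ i, (inner ℝ (hQ.eigenvectorBasis i) ((WithLp.equiv 2 (Fin 3 → ℝ)).symm m) : ℝ) • hQ.eigenvectorBasis i : EuclideanSpace ℝ (Fin 3)) := congrArg WithLp.ofLp h.symm
    _ = _ := by rw [Finset.sum_congr rfl (fun i _ => by rw [h2 i])]; rfl

lemma my_mulVec_sum {ι : Type*} (s : Finset ι) (A : Matrix (Fin 3) (Fin 3) ℝ) (f : ι → (Fin 3 → ℝ)) :
    A.mulVec (∑ i ∈ s, f i) = ∑ i ∈ s, A.mulVec (f i) := by
  exact Matrix.mulVec_sum A s f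

lemma my_sum_dot {ι : Type*} (s : Finset ι) (f : ι → (Fin 3 → ℝ)) (w : Fin 3 → ℝ) :
    (∑ i ∈ s, f i) ⬝ᵥ w = ∑ i ∈ s, f i ⬝ᵥ w := by
  simp [dotProduct, Finset.sum_apply, Finset.sum_mul]
  rw [Finset.sum_comm]

lemma my_dot_sum {ι : Type*} (s : Finset ι) (f : ι → (Fin 3 → ℝ)) (w : Fin 3 → ℝ) :
    w ⬝ᵥ (∑ i ∈ s, f i) = ∑ i ∈ s, w ⬝ᵥ f i := by
  simp [dotProduct, Finset.sum_apply, Finset.mul_sum]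
  rw [Finset.sum_comm]

lemma g1 (c : Fin 3 → ℝ) (j : Fin 3) :
    (⇑(hQ.eigenvectorBasis j) : Fin 3 → ℝ) ⬝ᵥ (∑ i, c i • ⇑(hQ.eigenvectorBasis i)) = c j := by
  rw [my_dot_sum]
  simp only [dotProduct_smul, basis_dot hQ, smul_eq_mul, mul_ite, mul_one, mul_zero]
  simp

lemma g2 (c : Fin 3 → ℝ) :
    (∑ i, c i • ⇑(hQ.eigenvectorBasis i)) ⬝ᵥ (∑ i, c i • ⇑(hQ.eigenvectorBasis i))
      = ∑ i, c i ^ 2 := by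
  rw [my_sum_dot]
  refine Finset.sum_congr rfl fun i _ => ?_
  rw [smul_dotProduct, g1 hQ, smul_eq_mul, sq]

lemma g3 (c : Fin 3 → ℝ) :
    Q.mulVec (∑ i, c i • ⇑(hQ.eigenvectorBasis i)) ⬝ᵥ (∑ i, c i • ⇑(hQ.eigenvectorBasis i))
      = ∑ i, hQ.eigenvalues i * c i ^ 2 := by
  rw [my_mulVec_sum]
  simp only [Matrix.mulVec_smul, hQ.mulVec_eigenvectorBasis]
  rw [my_sum_dot]
  refine Finset.sum_congr rfl fun i _ => ?_
  rw [smul_dotProduct, smul_dotProduct, g1 hQ, smul_eq_mul, smul_eq_mul]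
  ring

lemma spectral2 (m : Fin 3 → ℝ) :
    m ⬝ᵥ m = ∑ i, ((⇑(hQ.eigenvectorBasis i) : Fin 3 → ℝ) ⬝ᵥ m) ^ 2 := by
  have hm := spectral3 hQ m
  calc m ⬝ᵥ m = (∑ i, ((⇑(hQ.eigenvectorBasis i) : Fin 3 → ℝ) ⬝ᵥ m) • ⇑(hQ.eigenvectorBasis i))
        ⬝ᵥ (∑ i, ((⇑(hQ.eigenvectorBasis i) : Fin 3 → ℝ) ⬝ᵥ m) • ⇑(hQ.eigenvectorBasis i)) := by
        rw [← hm]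
    _ = _ := g2 hQ _

lemma spectral1 (m : Fin 3 → ℝ) :
    Q.mulVec m ⬝ᵥ m = ∑ i, hQ.eigenvalues i * ((⇑(hQ.eigenvectorBasis i) : Fin 3 → ℝ) ⬝ᵥ m) ^ 2 := by
  have hm := spectral3 hQ m
  calc Q.mulVec m ⬝ᵥ m
      = Q.mulVec (∑ i, ((⇑(hQ.eigenvectorBasis i) : Fin 3 → ℝ) ⬝ᵥ m) • ⇑(hQ.eigenvectorBasis i))
        ⬝ᵥ (∑ i, ((⇑(hQ.eigenvectorBasis i) : Fin 3 → ℝ) ⬝ᵥ m) • ⇑(hQ.eigenvectorBasis i)) := by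
        rw [← hm]
    _ = _ := g3 hQ _

lemma basis_unit (i : Fin 3) : (⇑(hQ.eigenvectorBasis i) : Fin 3 → ℝ) ⬝ᵥ ⇑(hQ.eigenvectorBasis i) = 1 := by
  rw [basis_dot hQ]; simp

lemma basis_ne_zero (i : Fin 3) : (⇑(hQ.eigenvectorBasis i) : Fin 3 → ℝ) ≠ 0 := by
  intro h
  have := basis_unit hQ i
  rw [h] at this
  simp [dotProduct] at this

lemma basis_rayleigh (i : Fin 3) :
    Q.mulVec ⇑(hQ.eigenvectorBasis i) ⬝ᵥ ⇑(hQ.eigenvectorBasis i) = hQ.eigenvalues i := by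
  rw [hQ.mulVec_eigenvectorBasis, smul_dotProduct, basis_unit hQ, smul_eq_mul, mul_one]

lemma eigen_le_rayleigh {t : ℝ} {v : Fin 3 → ℝ} (hv : v ≠ 0) (he : Q.mulVec v = t • v)
    {n : Fin 3 → ℝ}
    (h : ∀ m : Fin 3 → ℝ, m ⬝ᵥ m = 1 → Q.mulVec m ⬝ᵥ m ≤ Q.mulVec n ⬝ᵥ n) :
    t ≤ Q.mulVec n ⬝ᵥ n := by
  have hs : 0 < v ⬝ᵥ v := dot_self_pos hv
  set s := v ⬝ᵥ v with hsd
  set u : Fin 3 → ℝ := (Real.sqrt s)⁻¹ • v with hu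
  have hss : Real.sqrt s * Real.sqrt s = s := Real.mul_self_sqrt hs.le
  have hsne : Real.sqrt s ≠ 0 := ne_of_gt (Real.sqrt_pos.mpr hs)
  have huu : u ⬝ᵥ u = 1 := by
    rw [hu, smul_dotProduct, dotProduct_smul, smul_eq_mul, smul_eq_mul, ← hsd]
    field_simp
    rw [sq, hss]
  have hru : Q.mulVec u ⬝ᵥ u = t := by
    rw [hu, Matrix.mulVec_smul, he, smul_dotProduct, dotProduct_smul,
      smul_dotProduct, smul_eq_mul, smul_eq_mul, smul_eq_mul, ← hsd]
    field_simp
    rw [sq, hss]; ring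
  have := h u huu
  rwa [hru] at this

lemma rayleigh_max_iff (hQ : Q.IsHermitian) {n : Fin 3 → ℝ} (hn : n ⬝ᵥ n = 1) :
    (∀ m : Fin 3 → ℝ, m ⬝ᵥ m = 1 → Q.mulVec m ⬝ᵥ m ≤ Q.mulVec n ⬝ᵥ n) ↔
      ∃ lam : ℝ, IsGreatest {t : ℝ | ∃ v : Fin 3 → ℝ, v ≠ 0 ∧ Q.mulVec v = t • v} lam ∧
        Q.mulVec n = lam • n := by
  constructor
  · intro h
    set lam := Q.mulVec n ⬝ᵥ n with hlam
    have hsum2 : ∑ i, ((⇑(hQ.eigenvectorBasis i) : Fin 3 → ℝ) ⬝ᵥ n) ^ 2 = 1 := by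
      rw [← spectral2 hQ n, hn]
    have hsum1 : ∑ i, hQ.eigenvalues i * ((⇑(hQ.eigenvectorBasis i) : Fin 3 → ℝ) ⬝ᵥ n) ^ 2 = lam :=
      (spectral1 hQ n).symm
    have hμle : ∀ i, hQ.eigenvalues i ≤ lam := fun i => by
      have := h _ (basis_unit hQ i)
      rwa [basis_rayleigh hQ] at this
    have hzero : ∀ i ∈ Finset.univ,
        (lam - hQ.eigenvalues i) * ((⇑(hQ.eigenvectorBasis i) : Fin 3 → ℝ) ⬝ᵥ n) ^ 2 = 0 := by
      have hsz : ∑ i, (lam - hQ.eigenvalues i) * ((⇑(hQ.eigenvectorBasis i) : Fin 3 → ℝ) ⬝ᵥ n) ^ 2 = 0 := by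
        simp only [sub_mul, Finset.sum_sub_distrib, hsum1, ← Finset.mul_sum, hsum2, mul_one,
          sub_self]
      refine (Finset.sum_eq_zero_iff_of_nonneg fun i _ => ?_).mp hsz
      exact mul_nonneg (sub_nonneg.mpr (hμle i)) (sq_nonneg _)
    have hkey : ∀ i, hQ.eigenvalues i * ((⇑(hQ.eigenvectorBasis i) : Fin 3 → ℝ) ⬝ᵥ n)
        = lam * ((⇑(hQ.eigenvectorBasis i) : Fin 3 → ℝ) ⬝ᵥ n) := by
      intro i
      rcases mul_eq_zero.mp (hzero i (Finset.mem_univ i)) with h1 | h2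
      · have : hQ.eigenvalues i = lam := by linarith [sub_eq_zero.mp h1]
        rw [this]
      · have : (⇑(hQ.eigenvectorBasis i) : Fin 3 → ℝ) ⬝ᵥ n = 0 :=
          pow_eq_zero_iff (n := 2) (by norm_num) |>.mp h2
        rw [this, mul_zero, mul_zero]
    have heig : Q.mulVec n = lam • n := by
      conv_lhs => rw [spectral3 hQ n, my_mulVec_sum]
      conv_rhs => rw [spectral3 hQ n, Finset.smul_sum]
      refine Finset.sum_congr rfl fun i _ => ?_
      rw [Matrix.mulVec_smul, hQ.mulVec_eigenvectorBasis, smul_smul, smul_smul,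
        mul_comm _ (hQ.eigenvalues i), hkey i, mul_comm lam]
    refine ⟨lam, ⟨⟨n, ?_, heig⟩, ?_⟩, heig⟩
    · intro h0
      rw [h0] at hn
      simp [dotProduct] at hn
    · rintro t ⟨v, hv, he⟩
      exact eigen_le_rayleigh hv he h
  · rintro ⟨lam, ⟨hmem, hub⟩, heig⟩
    intro m hm
    have hRn : Q.mulVec n ⬝ᵥ n = lam := by
      rw [heig, smul_dotProduct, smul_eq_mul, hn, mul_one]
    rw [hRn, spectral1 hQ m]
    calc ∑ i, hQ.eigenvalues i * ((⇑(hQ.eigenvectorBasis i) : Fin 3 → ℝ) ⬝ᵥ m) ^ 2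
        ≤ ∑ i, lam * ((⇑(hQ.eigenvectorBasis i) : Fin 3 → ℝ) ⬝ᵥ m) ^ 2 := by
          refine Finset.sum_le_sum fun i _ => ?_
          have : hQ.eigenvalues i ≤ lam :=
            hub ⟨⇑(hQ.eigenvectorBasis i), basis_ne_zero hQ i, hQ.mulVec_eigenvectorBasis i⟩
          exact mul_le_mul_of_nonneg_right this (sq_nonneg _)
      _ = lam := by rw [← Finset.mul_sum, ← spectral2 hQ m, hm, mul_one]

lemma aux_ae_sphere (μ : Measure (Fin 3 → ℝ)) [IsProbabilityMeasure μ]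
    (hsph : μ {p | p ⬝ᵥ p = 1} = 1) : ∀ᵐ p ∂μ, p ⬝ᵥ p = 1 := by
  have hm : Measurable fun p : Fin 3 → ℝ => p ⬝ᵥ p := by
    simp only [dotProduct]
    exact Finset.measurable_sum _ fun i _ => (measurable_pi_apply i).mul (measurable_pi_apply i)
  have hS : MeasurableSet {p : Fin 3 → ℝ | p ⬝ᵥ p = 1} := hm (measurableSet_singleton 1)
  exact (prob_compl_eq_zero_iff hS).mpr hsph

lemma aux_int (μ : Measure (Fin 3 → ℝ)) [IsProbabilityMeasure μ]
    (hae : ∀ᵐ p ∂μ, p ⬝ᵥ p = 1) (i j : Fin 3) :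
    Integrable (fun p => p i * p j) μ := by
  refine Integrable.mono' (integrable_const 1)
    (((measurable_pi_apply i).mul (measurable_pi_apply j)).aestronglyMeasurable) ?_
  filter_upwards [hae] with p hp
  simp only [dotProduct] at hp
  have h1 : p i * p i ≤ 1 := by
    rw [← hp]
    exact Finset.single_le_sum (fun k _ => mul_self_nonneg (p k)) (Finset.mem_univ i)
  have h2 : p j * p j ≤ 1 := by
    rw [← hp]
    exact Finset.single_le_sum (fun k _ => mul_self_nonneg (p k)) (Finset.mem_univ j)
  rw [Real.norm_eq_abs, abs_le]
  constructor <;> nlinarith [mul_self_nonneg (p i), mul_self_nonneg (p j)]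

lemma aux_F (μ : Measure (Fin 3 → ℝ)) [IsProbabilityMeasure μ]
    (hae : ∀ᵐ p ∂μ, p ⬝ᵥ p = 1)
    (hint : ∀ i j : Fin 3, Integrable (fun p => p i * p j) μ)
    (m : Fin 3 → ℝ) (hm : m ⬝ᵥ m = 1) :
    (∫ p, ∑ i, ∑ j, (p i * p j - m i * m j) ^ 2 ∂μ)
      = 2 - 2 * ∑ i, ∑ j, m i * m j * ∫ p, p i * p j ∂μ := by
  have hptwise : ∀ᵐ p ∂μ, (∑ i, ∑ j, (p i * p j - m i * m j) ^ 2 : ℝ)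
      = 2 - 2 * ∑ i, ∑ j, m i * m j * (p i * p j) := by
    filter_upwards [hae] with p hp
    simp only [dotProduct, Fin.sum_univ_three] at hp hm ⊢
    linear_combination (p 0 * p 0 + p 1 * p 1 + p 2 * p 2 + 1) * hp
      + (m 0 * m 0 + m 1 * m 1 + m 2 * m 2 + 1) * hm
  rw [integral_congr_ae hptwise]
  have hint2 : Integrable (fun p => (∑ i, ∑ j, m i * m j * (p i * p j) : ℝ)) μ :=
    integrable_finset_sum _ fun i _ => integrable_finset_sum _ fun j _ => (hint i j).const_mul _
  rw [integral_sub (integrable_const 2) (hint2.const_mul 2), integral_const, integral_const_mul,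
    integral_finset_sum _ fun i _ => integrable_finset_sum _ fun j _ => (hint i j).const_mul _]
  simp only [measure_univ, probReal_univ, ENNReal.toReal_one, smul_eq_mul, one_mul]
  congr 2
  refine Finset.sum_congr rfl fun i _ => ?_
  rw [integral_finset_sum _ fun j _ => (hint i j).const_mul _]
  exact Finset.sum_congr rfl fun j _ => integral_const_mul _ _

lemma aux_Ray (μ : Measure (Fin 3 → ℝ)) (Q : Matrix (Fin 3) (Fin 3) ℝ)
    (hQ : Q = Matrix.of fun i j =>
      (∫ p, p i * p j ∂μ) - if i = j then (3:ℝ)⁻¹ else 0)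
    (m : Fin 3 → ℝ) (hm : m ⬝ᵥ m = 1) :
    Q.mulVec m ⬝ᵥ m = (∑ i, ∑ j, m i * m j * ∫ p, p i * p j ∂μ) - 3⁻¹ := by
  subst hQ
  simp only [Matrix.mulVec, dotProduct, Matrix.of_apply, Fin.sum_univ_three] at hm ⊢
  norm_num [Fin.ext_iff]
  linear_combination (-(3:ℝ)⁻¹) * hm

lemma aux_herm (μ : Measure (Fin 3 → ℝ)) (Q : Matrix (Fin 3) (Fin 3) ℝ)
    (hQ : Q = Matrix.of fun i j =>
      (∫ p, p i * p j ∂μ) - if i = j then (3:ℝ)⁻¹ else 0) : Q.IsHermitian := by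
  subst hQ
  rw [Matrix.IsHermitian]
  ext i j
  simp only [Matrix.conjTranspose_apply, Matrix.of_apply, star_trivial]
  have h1 : (∫ p, p j * p i ∂μ) = ∫ p, p i * p j ∂μ := by
    congr 1
    funext p
    ring
  rw [h1]
  rcases eq_or_ne i j with h | h
  · subst h; rfl
  · rw [if_neg h, if_neg (Ne.symm h)]

theorem director_minimizes_mean_distance (μ : Measure (Fin 3 → ℝ))
    [IsProbabilityMeasure μ] (hsph : μ {p | p ⬝ᵥ p = 1} = 1)
    (Q : Matrix (Fin 3) (Fin 3) ℝ)
    (hQ : Q = Matrix.of fun i j =>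
      (∫ p, p i * p j ∂μ) - if i = j then (3:ℝ)⁻¹ else 0)
    (F : (Fin 3 → ℝ) → ℝ)
    (hF : F = fun n => ∫ p, ∑ i, ∑ j, (p i * p j - n i * n j) ^ 2 ∂μ)
    (n : Fin 3 → ℝ) (hn : n ⬝ᵥ n = 1) :
    F n = 2 * (2/3 - Q.mulVec n ⬝ᵥ n) ∧
    ((∀ m : Fin 3 → ℝ, m ⬝ᵥ m = 1 → F n ≤ F m) ↔
      ∃ lam : ℝ, IsGreatest {t : ℝ | ∃ v : Fin 3 → ℝ, v ≠ 0 ∧ Q.mulVec v = t • v} lam ∧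
        Q.mulVec n = lam • n) := by
  have hae := aux_ae_sphere μ hsph
  have hint := aux_int μ hae
  have hsym : Q.IsHermitian := aux_herm μ Q hQ
  have hFm : ∀ m : Fin 3 → ℝ, m ⬝ᵥ m = 1 →
      F m = 2 - 2 * ∑ i, ∑ j, m i * m j * ∫ p, p i * p j ∂μ := by
    intro m hm
    rw [hF]
    exact aux_F μ hae hint m hm
  have hQm : ∀ m : Fin 3 → ℝ, m ⬝ᵥ m = 1 →
      Q.mulVec m ⬝ᵥ m = (∑ i, ∑ j, m i * m j * ∫ p, p i * p j ∂μ) - 3⁻¹ :=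
    fun m hm => aux_Ray μ Q hQ m hm
  constructor
  · have h1 := hFm n hn
    have h2 := hQm n hn
    rw [h1, h2]
    ring
  · have hequiv : (∀ m : Fin 3 → ℝ, m ⬝ᵥ m = 1 → F n ≤ F m)
        ↔ (∀ m : Fin 3 → ℝ, m ⬝ᵥ m = 1 → Q.mulVec m ⬝ᵥ m ≤ Q.mulVec n ⬝ᵥ n) := by
      constructor <;> intro h m hm <;>
        [skip; skip] <;>
        · have h1 := hFm m hm
          have h2 := hFm n hn
          have h3 := hQm m hm
          have h4 := hQm n hn
          have h5 := h m hm
          linarith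
    rw [hequiv]
    exact rayleigh_max_iff hsym hn
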